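/- arXiv:1612.07269 — 9 statements merged into one kernel-verified Lean document; each statement's English description precedes it below -/
import Mathlib

section
/- Let X and Y be real-valued random variables on a probability space and let f : ℝ → ℝ be nondecreasing with Y = f(X) almost surely. Then for all real x, y, H(x,y) = min(F1(x), F2(y)). -/
open MeasureTheory

/-- Comonotonic case of Fréchet's theorem: if `Y = f(X)` almost surely for a
nondecreasing function `f`, then the joint CDF attains the Fréchet–Hoeffding
upper bound: `H(x,y) = min(F1(x), F2(y))` for all `x, y`. -/
theorem comonotone_joint_cdf_eq_min
    {Ω : Type*} [MeasurableSpace Ω] (μ : Measure Ω) [IsProbabilityMeasure μ]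
    (X Y : Ω → ℝ) (hX : Measurable X) (hY : Measurable Y)
    (f : ℝ → ℝ) (hf : Monotone f) (hXY : ∀ᵐ ω ∂μ, Y ω = f (X ω)) (x y : ℝ) :
    (μ {ω | X ω ≤ x ∧ Y ω ≤ y}).toReal
      = min (μ {ω | X ω ≤ x}).toReal (μ {ω | Y ω ≤ y}).toReal := by
  have h1 : μ {ω | X ω ≤ x ∧ Y ω ≤ y} = μ {ω | X ω ≤ x ∧ f (X ω) ≤ y} := by
    refine measure_congr ?_
    filter_upwards [hXY] with ω h
    show (X ω ≤ x ∧ Y ω ≤ y) = (X ω ≤ x ∧ f (X ω) ≤ y)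
    rw [h]
  have h2 : μ {ω | Y ω ≤ y} = μ {ω | f (X ω) ≤ y} := by
    refine measure_congr ?_
    filter_upwards [hXY] with ω h
    show (Y ω ≤ y) = (f (X ω) ≤ y)
    rw [h]
  rw [h1, h2]
  by_cases hc : f x ≤ y
  · -- {X ≤ x} ⊆ {f ∘ X ≤ y}
    have hset : {ω | X ω ≤ x ∧ f (X ω) ≤ y} = {ω | X ω ≤ x} := by
      ext ω
      exact ⟨fun h => h.1, fun h => ⟨h, le_trans (hf h) hc⟩⟩
    have hsub : μ {ω | X ω ≤ x} ≤ μ {ω | f (X ω) ≤ y} :=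
      measure_mono fun ω h => le_trans (hf h) hc
    rw [hset, min_eq_left]
    exact ENNReal.toReal_le_toReal (measure_ne_top μ _) (measure_ne_top μ _) |>.mpr hsub
  · -- {f ∘ X ≤ y} ⊆ {X ≤ x}
    push_neg at hc
    have hsub' : ∀ t : ℝ, f t ≤ y → t ≤ x := by
      intro t ht
      by_contra hx
      push_neg at hx
      exact absurd (le_trans (hf hx.le) ht) (not_le.mpr hc)
    have hset : {ω | X ω ≤ x ∧ f (X ω) ≤ y} = {ω | f (X ω) ≤ y} := by
      ext ω
      exact ⟨fun h => h.2, fun h => ⟨hsub' _ h, h⟩⟩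
    have hsub : μ {ω | f (X ω) ≤ y} ≤ μ {ω | X ω ≤ x} :=
      measure_mono fun ω h => hsub' _ h
    rw [hset, min_eq_right]
    exact ENNReal.toReal_le_toReal (measure_ne_top μ _) (measure_ne_top μ _) |>.mpr hsub
end

section
/- Let X and Y be real-valued random variables on a probability space and let f : ℝ → ℝ be nonincreasing with Y = f(X) almost surely. Then for all real x, y, H(x,y) = max(F1(x) + F2(y) − 1, 0). -/
open MeasureTheory

/-- Countermonotonic case of Fréchet's theorem: if `Y = f(X)` almost surely for a
nonincreasing function `f`, then the joint CDF attains the Fréchet–Hoeffding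
lower bound: `H(x,y) = max(F1(x) + F2(y) − 1, 0)` for all `x, y`. -/
theorem countermonotone_joint_cdf_eq_max
    {Ω : Type*} [MeasurableSpace Ω] (μ : Measure Ω) [IsProbabilityMeasure μ]
    (X Y : Ω → ℝ) (hX : Measurable X) (hY : Measurable Y)
    (f : ℝ → ℝ) (hf : Antitone f) (hXY : ∀ᵐ ω ∂μ, Y ω = f (X ω)) (x y : ℝ) :
    (μ {ω | X ω ≤ x ∧ Y ω ≤ y}).toReal
      = max ((μ {ω | X ω ≤ x}).toReal + (μ {ω | Y ω ≤ y}).toReal - 1) 0 := by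
  classical
  set A : Set Ω := {ω | X ω ≤ x} with hA
  set B : Set Ω := {ω | Y ω ≤ y} with hB
  have hBm : MeasurableSet B := hY measurableSet_Iic
  have hkey : μ (A ∪ B) + μ (A ∩ B) = μ A + μ B := measure_union_add_inter A hBm
  have hAB : {ω | X ω ≤ x ∧ Y ω ≤ y} = A ∩ B := rfl
  by_cases hcase : ∃ t, t ≤ x ∧ f t ≤ y
  · obtain ⟨t₀, ht₀x, ht₀y⟩ := hcase
    have hunion : μ (A ∪ B) = 1 := by
      have huniv : (A ∪ B : Set Ω) =ᵐ[μ] (Set.univ : Set Ω) := by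
        rw [Filter.eventuallyEq_univ]
        filter_upwards [hXY] with ω hω
        by_cases h : X ω ≤ x
        · exact Or.inl h
        · refine Or.inr ?_
          show Y ω ≤ y
          rw [hω]
          exact le_trans (hf (le_of_lt (lt_of_le_of_lt ht₀x (not_le.mp h)))) ht₀y
      rw [measure_congr huniv, measure_univ]
    have hreal : (μ (A ∪ B)).toReal + (μ (A ∩ B)).toReal
        = (μ A).toReal + (μ B).toReal := by
      rw [← ENNReal.toReal_add (measure_ne_top μ _) (measure_ne_top μ _), hkey,
        ENNReal.toReal_add (measure_ne_top μ _) (measure_ne_top μ _)]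
    rw [hunion, ENNReal.toReal_one] at hreal
    have hnn : 0 ≤ (μ (A ∩ B)).toReal := ENNReal.toReal_nonneg
    rw [hAB, max_eq_left (by linarith)]
    linarith
  · push_neg at hcase
    have hinter : μ (A ∩ B) = 0 := by
      rw [measure_eq_zero_iff_ae_notMem]
      filter_upwards [hXY] with ω hω
      rintro ⟨h1, h2⟩
      have h2' : Y ω ≤ y := h2
      rw [hω] at h2'
      exact absurd h2' (not_le.mpr (hcase _ h1))
    have hsum : μ A + μ B ≤ 1 := by
      rw [← hkey, hinter, add_zero]
      exact prob_le_one
    have hle : (μ A).toReal + (μ B).toReal ≤ 1 := by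
      rw [← ENNReal.toReal_add (measure_ne_top μ _) (measure_ne_top μ _)]
      simpa using ENNReal.toReal_mono ENNReal.one_ne_top hsum
    rw [hAB, hinter, ENNReal.toReal_zero, max_eq_right (by linarith)]
end

section
/- Let f : ℝ → ℝ and x0 ∈ ℝ be such that f is nonincreasing on (−∞, x0] and nondecreasing on [x0, ∞) (a single global minimum). Let X be a real-valued random variable and Y = f(X) almost surely, with the law of Y atomless. Then: (i) for every x ≤ x0, P(X ≤ x, Y ≤ f(x)) = 0 and F1(x) + F2(f(x)) ≤ 1, so H(x, f(x)) = max(F1(x) + F2(f(x)) − 1, 0) (the Fréchet–Hoeffding lower bound); and (ii) for every x ≥ x0, P(X ≤ x, Y ≤ f(x)) = F2(f(x)) and F2(f(x)) ≤ F1(x), so H(x, f(x)) = min(F1(x), F2(f(x))) (the Fréchet–Hoeffding upper bound). -/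
open MeasureTheory

/-- Single-global-minimum case of the paper's Theorem 3: if `f` is nonincreasing
on `(−∞, x0]` and nondecreasing on `[x0, ∞)`, `Y = f(X)` almost surely, and the
law of `Y` is atomless, then the joint CDF equals the Fréchet–Hoeffding lower
bound along the nonincreasing branch and the upper bound along the nondecreasing
branch. -/
theorem joint_cdf_single_minimum
    {Ω : Type*} [MeasurableSpace Ω] (μ : Measure Ω) [IsProbabilityMeasure μ]
    (X Y : Ω → ℝ) (hX : Measurable X) (hY : Measurable Y)
    (f : ℝ → ℝ) (x0 : ℝ)
    (hdec : AntitoneOn f (Set.Iic x0)) (hinc : MonotoneOn f (Set.Ici x0))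
    (hXY : ∀ᵐ ω ∂μ, Y ω = f (X ω))
    (hatomless : ∀ c : ℝ, μ {ω | Y ω = c} = 0) :
    (∀ x : ℝ, x ≤ x0 →
      (μ {ω | X ω ≤ x ∧ Y ω ≤ f x}).toReal = 0 ∧
      (μ {ω | X ω ≤ x}).toReal + (μ {ω | Y ω ≤ f x}).toReal ≤ 1 ∧
      (μ {ω | X ω ≤ x ∧ Y ω ≤ f x}).toReal
        = max ((μ {ω | X ω ≤ x}).toReal + (μ {ω | Y ω ≤ f x}).toReal - 1) 0) ∧
    (∀ x : ℝ, x0 ≤ x →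
      (μ {ω | X ω ≤ x ∧ Y ω ≤ f x}).toReal = (μ {ω | Y ω ≤ f x}).toReal ∧
      (μ {ω | Y ω ≤ f x}).toReal ≤ (μ {ω | X ω ≤ x}).toReal ∧
      (μ {ω | X ω ≤ x ∧ Y ω ≤ f x}).toReal
        = min (μ {ω | X ω ≤ x}).toReal (μ {ω | Y ω ≤ f x}).toReal) := by
  have hN : μ {ω | ¬ Y ω = f (X ω)} = 0 := ae_iff.mp hXY
  constructor
  · intro x hx
    have hzero : μ {ω | X ω ≤ x ∧ Y ω ≤ f x} = 0 := by
      refine measure_mono_null (t := {ω | Y ω = f x} ∪ {ω | ¬ Y ω = f (X ω)}) ?_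
        (measure_union_null (hatomless (f x)) hN)
      intro ω hω
      by_cases h : Y ω = f (X ω)
      · left
        have hfx : f x ≤ f (X ω) := hdec (hω.1.trans hx) hx hω.1
        exact le_antisymm hω.2 (h ▸ hfx)
      · right; exact h
    have h1 : μ {ω | X ω ≤ x} ≤ μ {ω | f x ≤ Y ω} := by
      have hsub : {ω | X ω ≤ x} ⊆ {ω | f x ≤ Y ω} ∪ {ω | ¬ Y ω = f (X ω)} := by
        intro ω hω
        by_cases h : Y ω = f (X ω)
        · left
          show f x ≤ Y ω
          rw [h]; exact hdec (hω.trans hx) hx hω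
        · right; exact h
      calc μ {ω | X ω ≤ x} ≤ _ := measure_mono hsub
        _ ≤ μ {ω | f x ≤ Y ω} + μ {ω | ¬ Y ω = f (X ω)} := measure_union_le _ _
        _ = μ {ω | f x ≤ Y ω} := by rw [hN, add_zero]
    have h2 : μ {ω | Y ω ≤ f x} ≤ μ {ω | Y ω < f x} := by
      have hsub : {ω | Y ω ≤ f x} ⊆ {ω | Y ω < f x} ∪ {ω | Y ω = f x} := by
        intro ω hω
        have hω' : Y ω ≤ f x := hω
        rcases lt_or_eq_of_le hω' with h | h
        · exact Or.inl h
        · exact Or.inr h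
      calc μ {ω | Y ω ≤ f x} ≤ _ := measure_mono hsub
        _ ≤ μ {ω | Y ω < f x} + μ {ω | Y ω = f x} := measure_union_le _ _
        _ = μ {ω | Y ω < f x} := by rw [hatomless, add_zero]
    have hsum : μ {ω | X ω ≤ x} + μ {ω | Y ω ≤ f x} ≤ 1 := by
      have hdisj : Disjoint {ω | f x ≤ Y ω} {ω | Y ω < f x} := by
        rw [Set.disjoint_left]
        intro ω h1 h2
        simp only [Set.mem_setOf_eq] at h1 h2
        exact absurd h1 (not_le.mpr h2)
      have hmeas : MeasurableSet {ω | Y ω < f x} := hY measurableSet_Iio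
      calc μ {ω | X ω ≤ x} + μ {ω | Y ω ≤ f x}
          ≤ μ {ω | f x ≤ Y ω} + μ {ω | Y ω < f x} := add_le_add h1 h2
        _ = μ ({ω | f x ≤ Y ω} ∪ {ω | Y ω < f x}) := (measure_union hdisj hmeas).symm
        _ ≤ μ Set.univ := measure_mono (Set.subset_univ _)
        _ = 1 := measure_univ
    have htr : (μ {ω | X ω ≤ x}).toReal + (μ {ω | Y ω ≤ f x}).toReal ≤ 1 := by
      rw [← ENNReal.toReal_add (measure_ne_top μ _) (measure_ne_top μ _)]
      have := ENNReal.toReal_mono (by simp) hsum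
      simpa using this
    refine ⟨by simp [hzero], htr, ?_⟩
    rw [hzero, max_eq_right (by linarith)]
    simp
  · intro x hx
    have key : μ {ω | X ω ≤ x ∧ Y ω ≤ f x} = μ {ω | Y ω ≤ f x} := by
      refine le_antisymm (measure_mono fun ω hω => hω.2) ?_
      have hsub : {ω | Y ω ≤ f x} ⊆ {ω | X ω ≤ x ∧ Y ω ≤ f x} ∪
          ({ω | Y ω = f x} ∪ {ω | ¬ Y ω = f (X ω)}) := by
        intro ω hω
        by_cases h : Y ω = f (X ω)
        · by_cases hxω : X ω ≤ x
          · left; exact ⟨hxω, hω⟩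
          · right; left
            have hlt := not_le.mp hxω
            have hfx : f x ≤ f (X ω) := hinc hx (hx.trans hlt.le) hlt.le
            exact le_antisymm hω (h ▸ hfx)
        · right; right; exact h
      calc μ {ω | Y ω ≤ f x} ≤ _ := measure_mono hsub
        _ ≤ μ {ω | X ω ≤ x ∧ Y ω ≤ f x} +
            μ ({ω | Y ω = f x} ∪ {ω | ¬ Y ω = f (X ω)}) := measure_union_le _ _
        _ = μ {ω | X ω ≤ x ∧ Y ω ≤ f x} := by
            rw [measure_union_null (hatomless (f x)) hN, add_zero]
    have hle : (μ {ω | Y ω ≤ f x}).toReal ≤ (μ {ω | X ω ≤ x}).toReal := by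
      refine ENNReal.toReal_mono (measure_ne_top μ _) ?_
      rw [← key]
      exact measure_mono fun ω hω => hω.1
    exact ⟨by rw [key], hle, by rw [key, min_eq_right hle]⟩
end

section
/- Let f : ℝ → ℝ and x0 ∈ ℝ be such that f is nondecreasing on (−∞, x0] and nonincreasing on [x0, ∞) (a single global maximum). Let X be a real-valued random variable and Y = f(X) almost surely. Then: (i) for every x ≤ x0, H(x, f(x)) = F1(x) and F1(x) ≤ F2(f(x)), so H(x, f(x)) = min(F1(x), F2(f(x))) (the Fréchet–Hoeffding upper bound); and (ii) for every x ≥ x0, H(x, f(x)) = F1(x) + F2(f(x)) − 1 ≥ 0, so H(x, f(x)) = max(F1(x) + F2(f(x)) − 1, 0) (the Fréchet–Hoeffding lower bound). -/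
open MeasureTheory

/-- Single-global-maximum case of the paper's Theorem 3: if `f` is nondecreasing
on `(−∞, x0]` and nonincreasing on `[x0, ∞)` and `Y = f(X)` almost surely, then
the joint CDF equals the Fréchet–Hoeffding upper bound along the nondecreasing
branch and the lower bound along the nonincreasing branch. -/
theorem joint_cdf_single_maximum
    {Ω : Type*} [MeasurableSpace Ω] (μ : Measure Ω) [IsProbabilityMeasure μ]
    (X Y : Ω → ℝ) (hX : Measurable X) (hY : Measurable Y)
    (f : ℝ → ℝ) (x0 : ℝ)
    (hinc : MonotoneOn f (Set.Iic x0)) (hdec : AntitoneOn f (Set.Ici x0))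
    (hXY : ∀ᵐ ω ∂μ, Y ω = f (X ω)) :
    (∀ x : ℝ, x ≤ x0 →
      (μ {ω | X ω ≤ x ∧ Y ω ≤ f x}).toReal = (μ {ω | X ω ≤ x}).toReal ∧
      (μ {ω | X ω ≤ x}).toReal ≤ (μ {ω | Y ω ≤ f x}).toReal ∧
      (μ {ω | X ω ≤ x ∧ Y ω ≤ f x}).toReal
        = min (μ {ω | X ω ≤ x}).toReal (μ {ω | Y ω ≤ f x}).toReal) ∧
    (∀ x : ℝ, x0 ≤ x →
      (μ {ω | X ω ≤ x ∧ Y ω ≤ f x}).toReal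
        = (μ {ω | X ω ≤ x}).toReal + (μ {ω | Y ω ≤ f x}).toReal - 1 ∧
      0 ≤ (μ {ω | X ω ≤ x}).toReal + (μ {ω | Y ω ≤ f x}).toReal - 1 ∧
      (μ {ω | X ω ≤ x ∧ Y ω ≤ f x}).toReal
        = max ((μ {ω | X ω ≤ x}).toReal + (μ {ω | Y ω ≤ f x}).toReal - 1) 0) := by
  constructor
  · intro x hx
    set A : Set Ω := {ω | X ω ≤ x}
    set B : Set Ω := {ω | Y ω ≤ f x}
    have hsub : A ≤ᵐ[μ] (A ∩ B : Set Ω) := by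
      filter_upwards [hXY] with ω hω hωA
      refine ⟨hωA, ?_⟩
      show Y ω ≤ f x
      rw [hω]
      exact hinc (le_trans hωA hx) hx hωA
    have h1 : μ (A ∩ B) = μ A :=
      le_antisymm (measure_mono Set.inter_subset_left) (measure_mono_ae hsub)
    have h2 : μ A ≤ μ B := by
      refine measure_mono_ae ?_
      filter_upwards [hXY] with ω hω hωA
      show Y ω ≤ f x
      rw [hω]
      exact hinc (le_trans hωA hx) hx hωA
    have hAB : {ω | X ω ≤ x ∧ Y ω ≤ f x} = A ∩ B := rfl
    have h1' : (μ (A ∩ B)).toReal = (μ A).toReal := by rw [h1]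
    have h2' : (μ A).toReal ≤ (μ B).toReal :=
      ENNReal.toReal_le_toReal (measure_ne_top μ A) (measure_ne_top μ B) |>.mpr h2
    refine ⟨by rw [hAB, h1'], h2', ?_⟩
    rw [hAB, h1', min_eq_left h2']
  · intro x hx
    set A : Set Ω := {ω | X ω ≤ x}
    set B : Set Ω := {ω | Y ω ≤ f x}
    have hmA : MeasurableSet A := hX measurableSet_Iic
    have hmB : MeasurableSet B := hY measurableSet_Iic
    have hunion : μ (A ∪ B) = 1 := by
      refine le_antisymm prob_le_one ?_
      have : (Set.univ : Set Ω) ≤ᵐ[μ] ((A ∪ B : Set Ω)) := by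
        filter_upwards [hXY] with ω hω _
        by_cases h : X ω ≤ x
        · exact Or.inl h
        · refine Or.inr ?_
          show Y ω ≤ f x
          rw [hω]
          exact hdec hx (le_trans hx (le_of_not_ge h)) (le_of_not_ge h)
      calc (1 : ENNReal) = μ Set.univ := (measure_univ).symm
        _ ≤ μ (A ∪ B) := measure_mono_ae this
    have key : μ (A ∪ B) + μ (A ∩ B) = μ A + μ B := measure_union_add_inter A hmB
    rw [hunion] at key
    have hkey : 1 + (μ (A ∩ B)).toReal = (μ A).toReal + (μ B).toReal := by
      have := congrArg ENNReal.toReal key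
      rwa [ENNReal.toReal_add (by simp) (measure_ne_top μ _),
        ENNReal.toReal_add (measure_ne_top μ _) (measure_ne_top μ _),
        ENNReal.toReal_one] at this
    have hAB : {ω | X ω ≤ x ∧ Y ω ≤ f x} = A ∩ B := rfl
    have h1 : (μ (A ∩ B)).toReal = (μ A).toReal + (μ B).toReal - 1 := by linarith
    have h2 : 0 ≤ (μ A).toReal + (μ B).toReal - 1 := by
      have := ENNReal.toReal_nonneg (a := μ (A ∩ B)); linarith
    refine ⟨by rw [hAB, h1], h2, ?_⟩
    rw [hAB, h1, max_eq_left h2]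
end

section
/- Let X and Y be real-valued random variables on a probability space. Then λ(x,y) = 0 for every point (x,y) with 0 < F1(x) < 1 and 0 < F2(y) < 1 if and only if X and Y are independent. -/
open MeasureTheory

/-- The relative distance function `λ` of the paper, expressed in terms of the
joint CDF value `H = H(x,y)` and the marginal CDF values `F1 = F1(x)`,
`F2 = F2(y)`. -/
noncomputable def relDist (H F1 F2 : ℝ) : ℝ :=
  if F1 * F2 ≤ H then (H - F1 * F2) / (min F1 F2 - F1 * F2)
  else (H - F1 * F2) / (max (F1 + F2 - 1) 0 - F1 * F2)

lemma relDist_eq_zero_of_eq {H F1 F2 : ℝ} (h : H = F1 * F2) : relDist H F1 F2 = 0 := by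
  unfold relDist
  split <;> simp [h]

lemma eq_of_relDist_eq_zero {H F1 F2 : ℝ} (h1 : 0 < F1) (h1' : F1 < 1)
    (h2 : 0 < F2) (h2' : F2 < 1) (h : relDist H F1 F2 = 0) : H = F1 * F2 := by
  unfold relDist at h
  split at h
  · have hden : (0:ℝ) < min F1 F2 - F1 * F2 := by
      rcases le_total F1 F2 with hle | hle
      · rw [min_eq_left hle]; nlinarith
      · rw [min_eq_right hle]; nlinarith
    have := div_eq_zero_iff.mp h
    rcases this with h0 | h0
    · linarith
    · linarith
  · have hden : max (F1 + F2 - 1) 0 - F1 * F2 < 0 := by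
      rcases le_total (F1 + F2 - 1) 0 with hle | hle
      · rw [max_eq_right hle]; nlinarith
      · rw [max_eq_left hle]; nlinarith
    have := div_eq_zero_iff.mp h
    rcases this with h0 | h0
    · linarith
    · linarith

/-- Theorem 4(b) of the paper: `λ(x,y) = 0` at every point `(x,y)` with
`0 < F1(x) < 1` and `0 < F2(y) < 1` if and only if `X` and `Y` are
independent. -/
theorem relDist_eq_zero_iff_indep
    {Ω : Type*} [MeasurableSpace Ω] (μ : Measure Ω) [IsProbabilityMeasure μ]
    (X Y : Ω → ℝ) (hX : Measurable X) (hY : Measurable Y) :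
    (∀ x y : ℝ,
      0 < (μ {ω | X ω ≤ x}).toReal → (μ {ω | X ω ≤ x}).toReal < 1 →
      0 < (μ {ω | Y ω ≤ y}).toReal → (μ {ω | Y ω ≤ y}).toReal < 1 →
      relDist (μ {ω | X ω ≤ x ∧ Y ω ≤ y}).toReal
        (μ {ω | X ω ≤ x}).toReal (μ {ω | Y ω ≤ y}).toReal = 0)
    ↔ ProbabilityTheory.IndepFun X Y μ := by
  have hsetX : ∀ x : ℝ, {ω | X ω ≤ x} = X ⁻¹' Set.Iic x := fun x => rfl
  have hsetY : ∀ y : ℝ, {ω | Y ω ≤ y} = Y ⁻¹' Set.Iic y := fun y => rfl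
  have hsetXY : ∀ (x y : ℝ), {ω | X ω ≤ x ∧ Y ω ≤ y} =
      (X ⁻¹' Set.Iic x) ∩ (Y ⁻¹' Set.Iic y) := fun x y => rfl
  have hmX : ∀ x : ℝ, MeasurableSet (X ⁻¹' Set.Iic x) := fun x => hX measurableSet_Iic
  have hmY : ∀ y : ℝ, MeasurableSet (Y ⁻¹' Set.Iic y) := fun y => hY measurableSet_Iic
  constructor
  · intro hyp
    -- key: the joint CDF factors at every point
    have key : ∀ x y : ℝ, μ ((X ⁻¹' Set.Iic x) ∩ (Y ⁻¹' Set.Iic y))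
        = μ (X ⁻¹' Set.Iic x) * μ (Y ⁻¹' Set.Iic y) := by
      intro x y
      set a := μ (X ⁻¹' Set.Iic x) with ha
      set b := μ (Y ⁻¹' Set.Iic y) with hb
      have haf : a ≠ ⊤ := measure_ne_top μ _
      have hbf : b ≠ ⊤ := measure_ne_top μ _
      have ha1 : a ≤ 1 := prob_le_one
      have hb1 : b ≤ 1 := prob_le_one
      rcases eq_or_lt_of_le (zero_le : (0:ENNReal) ≤ a) with ha0 | ha0
      · -- a = 0
        have : μ ((X ⁻¹' Set.Iic x) ∩ (Y ⁻¹' Set.Iic y)) = 0 :=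
          le_antisymm (le_trans (measure_mono Set.inter_subset_left) ha0.symm.le) zero_le
        rw [this, ← ha0, zero_mul]
      rcases eq_or_lt_of_le ha1 with ha1' | ha1'
      · -- a = 1
        have hXc : μ (X ⁻¹' Set.Iic x)ᶜ = 0 := by
          rw [measure_compl (hmX x) (measure_ne_top μ _), ← ha, ha1', measure_univ, tsub_self]
        rw [Set.inter_comm, measure_inter_conull hXc, ha1', one_mul]
      rcases eq_or_lt_of_le (zero_le : (0:ENNReal) ≤ b) with hb0 | hb0
      · have : μ ((X ⁻¹' Set.Iic x) ∩ (Y ⁻¹' Set.Iic y)) = 0 :=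
          le_antisymm (le_trans (measure_mono Set.inter_subset_right) hb0.symm.le) zero_le
        rw [this, ← hb0, mul_zero]
      rcases eq_or_lt_of_le hb1 with hb1' | hb1'
      · have hYc : μ (Y ⁻¹' Set.Iic y)ᶜ = 0 := by
          rw [measure_compl (hmY y) (measure_ne_top μ _), ← hb, hb1', measure_univ, tsub_self]
        rw [measure_inter_conull hYc, hb1', mul_one]
      -- now 0 < a < 1, 0 < b < 1
      have haR0 : 0 < a.toReal := ENNReal.toReal_pos (ne_of_gt ha0) haf
      have haR1 : a.toReal < 1 := by
        rw [show (1:ℝ) = (1:ENNReal).toReal by simp]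
        exact ENNReal.toReal_strict_mono ENNReal.one_ne_top ha1'
      have hbR0 : 0 < b.toReal := ENNReal.toReal_pos (ne_of_gt hb0) hbf
      have hbR1 : b.toReal < 1 := by
        rw [show (1:ℝ) = (1:ENNReal).toReal by simp]
        exact ENNReal.toReal_strict_mono ENNReal.one_ne_top hb1'
      have h0 := hyp x y
      rw [hsetX, hsetY, hsetXY, ← ha, ← hb] at h0
      have h0 := h0 haR0 haR1 hbR0 hbR1
      have hH := eq_of_relDist_eq_zero haR0 haR1 hbR0 hbR1 h0
      have : (μ ((X ⁻¹' Set.Iic x) ∩ (Y ⁻¹' Set.Iic y))).toReal = (a * b).toReal := by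
        rw [hH, ENNReal.toReal_mul]
      exact (ENNReal.toReal_eq_toReal_iff' (measure_ne_top μ _)
        (ENNReal.mul_ne_top haf hbf)).mp this
    -- π-system argument
    have hR : (Real.measurableSpace : MeasurableSpace ℝ)
        = MeasurableSpace.generateFrom (Set.range Set.Iic) := by
      rw [← borel_eq_generateFrom_Iic ℝ]
      exact BorelSpace.measurable_eq
    unfold ProbabilityTheory.IndepFun
    apply ProbabilityTheory.IndepSets.indep hX.comap_le hY.comap_le
      (IsPiSystem.comap isPiSystem_Iic X) (IsPiSystem.comap isPiSystem_Iic Y)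
      (by rw [hR, MeasurableSpace.comap_generateFrom]; rfl)
      (by rw [hR, MeasurableSpace.comap_generateFrom]; rfl)
    rintro s t ⟨s', ⟨xs, rfl⟩, rfl⟩ ⟨t', ⟨yt, rfl⟩, rfl⟩
    filter_upwards with _
    simpa using key xs yt
  · intro hind x y _ _ _ _
    have := hind.measure_inter_preimage_eq_mul (Set.Iic x) (Set.Iic y)
      measurableSet_Iic measurableSet_Iic
    rw [hsetX, hsetY, hsetXY, this, ENNReal.toReal_mul]
    exact relDist_eq_zero_of_eq rfl
end

section
/- Let X and Y be real-valued random variables on a probability space and let f : ℝ → ℝ be monotone (either nondecreasing on ℝ or nonincreasing on ℝ) with Y = f(X) almost surely. Then λ(x,y) = 1 for every point (x,y) with 0 < F1(x) < 1 and 0 < F2(y) < 1. -/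
open MeasureTheory

lemma relDist_min_eq_one (F1 F2 : ℝ) (h1 : 0 < F1) (h1' : F1 < 1)
    (h2 : 0 < F2) (h2' : F2 < 1) : relDist (min F1 F2) F1 F2 = 1 := by
  have hle : F1 * F2 ≤ min F1 F2 := by
    rcases min_cases F1 F2 with ⟨h, _⟩ | ⟨h, _⟩ <;> rw [h] <;> nlinarith
  have hne : min F1 F2 - F1 * F2 ≠ 0 := by
    rcases min_cases F1 F2 with ⟨h, h'⟩ | ⟨h, h'⟩ <;> rw [h] <;> nlinarith
  rw [relDist, if_pos hle, div_self hne]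

lemma relDist_sub_eq_one (F1 F2 : ℝ) (h1 : 0 < F1) (h1' : F1 < 1)
    (h2 : 0 < F2) (h2' : F2 < 1) (hsum : 1 ≤ F1 + F2) :
    relDist (F1 + F2 - 1) F1 F2 = 1 := by
  have hlt : ¬ F1 * F2 ≤ F1 + F2 - 1 := by nlinarith
  have hmax : max (F1 + F2 - 1) 0 = F1 + F2 - 1 := max_eq_left (by linarith)
  have hne : F1 + F2 - 1 - F1 * F2 ≠ 0 := by nlinarith
  rw [relDist, if_neg hlt, hmax, div_self hne]

lemma relDist_zero_eq_one (F1 F2 : ℝ) (h1 : 0 < F1) (h1' : F1 < 1)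
    (h2 : 0 < F2) (h2' : F2 < 1) (hsum : F1 + F2 ≤ 1) :
    relDist 0 F1 F2 = 1 := by
  have hlt : ¬ F1 * F2 ≤ 0 := by nlinarith
  have hmax : max (F1 + F2 - 1) 0 = 0 := max_eq_right (by linarith)
  have hne : (0:ℝ) - F1 * F2 ≠ 0 := by nlinarith
  rw [relDist, if_neg hlt, hmax, div_self hne]

/-- Theorem 4(c) of the paper: if `Y = f(X)` almost surely for a monotone
function `f` (nondecreasing or nonincreasing on all of `ℝ`), then `λ(x,y) = 1`
at every point `(x,y)` with `0 < F1(x) < 1` and `0 < F2(y) < 1`. -/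
theorem relDist_eq_one_of_monotone
    {Ω : Type*} [MeasurableSpace Ω] (μ : Measure Ω) [IsProbabilityMeasure μ]
    (X Y : Ω → ℝ) (hX : Measurable X) (hY : Measurable Y)
    (f : ℝ → ℝ) (hf : Monotone f ∨ Antitone f)
    (hXY : ∀ᵐ ω ∂μ, Y ω = f (X ω)) :
    ∀ x y : ℝ,
      0 < (μ {ω | X ω ≤ x}).toReal → (μ {ω | X ω ≤ x}).toReal < 1 →
      0 < (μ {ω | Y ω ≤ y}).toReal → (μ {ω | Y ω ≤ y}).toReal < 1 →
      relDist (μ {ω | X ω ≤ x ∧ Y ω ≤ y}).toReal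
        (μ {ω | X ω ≤ x}).toReal (μ {ω | Y ω ≤ y}).toReal = 1 := by
  intro x y hF1 hF1' hF2 hF2'
  set A : Set Ω := {ω | X ω ≤ x} with hA
  set B : Set Ω := {ω | Y ω ≤ y} with hB
  set S : Set Ω := {ω | f (X ω) ≤ y} with hS
  have hBS : B =ᵐ[μ] S := by
    filter_upwards [hXY] with ω h
    show (Y ω ≤ y) = (f (X ω) ≤ y)
    rw [h]
  have hABS : (A ∩ B : Set Ω) =ᵐ[μ] (A ∩ S : Set Ω) :=
    Filter.EventuallyEq.inter (Filter.EventuallyEq.refl _ _) hBS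
  have hInter : {ω | X ω ≤ x ∧ Y ω ≤ y} = A ∩ B := rfl
  have hmuB : μ B = μ S := measure_congr hBS
  have hmuAB : μ (A ∩ B) = μ (A ∩ S) := measure_congr hABS
  rw [hInter, hmuAB]
  have hAS : A = X ⁻¹' Set.Iic x := rfl
  have hSX : S = X ⁻¹' {t | f t ≤ y} := rfl
  rcases hf with hf | hf
  · -- monotone : comparable lower sets
    have hlow : IsLowerSet {t : ℝ | f t ≤ y} := fun a b hba ha =>
      le_trans (hf hba) ha
    have hlow' : IsLowerSet (Set.Iic x) := isLowerSet_Iic x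
    rcases hlow.total hlow' with h | h
    · -- S ⊆ A
      have hsub : S ⊆ A := fun ω hω => h hω
      have hAS' : A ∩ S = S := Set.inter_eq_right.2 hsub
      rw [hAS', ← hmuB]
      have hle : (μ B).toReal ≤ (μ A).toReal := by
        apply ENNReal.toReal_mono (measure_ne_top μ A)
        rw [hmuB]; exact measure_mono hsub
      have := relDist_min_eq_one _ _ hF1 hF1' hF2 hF2'
      rwa [min_eq_right hle] at this
    · -- A ⊆ S
      have hsub : A ⊆ S := fun ω hω => h hω
      have hAS' : A ∩ S = A := Set.inter_eq_left.2 hsub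
      rw [hAS']
      have hle : (μ A).toReal ≤ (μ B).toReal := by
        apply ENNReal.toReal_mono (measure_ne_top μ B)
        rw [hmuB]; exact measure_mono hsub
      have := relDist_min_eq_one _ _ hF1 hF1' hF2 hF2'
      rwa [min_eq_left hle] at this
  · -- antitone : S is preimage of an upper set
    have hup : IsUpperSet {t : ℝ | f t ≤ y} := fun a b hab ha =>
      le_trans (hf hab) ha
    have hSmeas : MeasurableSet S := (hf.measurable.comp hX) measurableSet_Iic
    have hAmeas : MeasurableSet A := hX measurableSet_Iic
    by_cases hcase : ∃ a ∈ {t : ℝ | f t ≤ y}, a ≤ x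
    · -- union is everything
      have huniv : A ∪ S = Set.univ := by
        obtain ⟨a, ha, hax⟩ := hcase
        ext ω; simp only [Set.mem_union, Set.mem_univ, iff_true]
        rcases le_or_gt (X ω) x with h | h
        · exact Or.inl h
        · exact Or.inr (hup (le_trans hax h.le) ha)
      have hincl : μ (A ∪ S) + μ (A ∩ S) = μ A + μ S :=
        measure_union_add_inter A hSmeas
      rw [huniv, measure_univ] at hincl
      have hH : (μ (A ∩ S)).toReal = (μ A).toReal + (μ B).toReal - 1 := by
        have h1 : (1 + μ (A ∩ S)).toReal = (μ A + μ S).toReal := by rw [hincl]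
        rw [ENNReal.toReal_add (by norm_num) (measure_ne_top μ _),
            ENNReal.toReal_add (measure_ne_top μ _) (measure_ne_top μ _)] at h1
        rw [hmuB]
        simp only [ENNReal.toReal_one] at h1
        linarith
      have hsum : 1 ≤ (μ A).toReal + (μ B).toReal := by
        have : (0:ℝ) ≤ (μ (A ∩ S)).toReal := ENNReal.toReal_nonneg
        linarith [hH]
      rw [hH]
      exact relDist_sub_eq_one _ _ hF1 hF1' hF2 hF2' hsum
    · -- disjoint
      push_neg at hcase
      have hdisj : A ∩ S = ∅ := by
        ext ω
        simp only [Set.mem_inter_iff, Set.mem_empty_iff_false, iff_false]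
        rintro ⟨h1, h2⟩
        exact absurd h1 (not_le.2 (hcase _ h2))
      have hsum : (μ A).toReal + (μ B).toReal ≤ 1 := by
        have hd : Disjoint A S := Set.disjoint_iff_inter_eq_empty.2 hdisj
        have hmu : μ (A ∪ S) = μ A + μ S := measure_union hd hSmeas
        have hle : μ A + μ S ≤ 1 := by
          rw [← hmu]; exact prob_le_one
        have := ENNReal.toReal_mono (by norm_num) hle
        rw [ENNReal.toReal_add (measure_ne_top μ _) (measure_ne_top μ _)] at this
        rw [hmuB]
        simpa using this
      rw [hdisj]
      simp only [measure_empty, ENNReal.toReal_zero]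
      exact relDist_zero_eq_one _ _ hF1 hF1' hF2 hF2' hsum
end

section
/- Let f : ℝ → ℝ and x0 ∈ ℝ be such that either (a) f is nonincreasing on (−∞, x0] and nondecreasing on [x0, ∞), or (b) f is nondecreasing on (−∞, x0] and nonincreasing on [x0, ∞) (i.e., f has a single optimum). Let X be a real-valued random variable and Y = f(X) almost surely, with the law of Y atomless. Then for every x such that 0 < F1(x) < 1 and 0 < F2(f(x)) < 1, one has λ(x, f(x)) = 1. -/
open MeasureTheory

/-- Corollary 2 of the paper: if `f` has a single optimum (either a single
global minimum, i.e. nonincreasing on `(−∞, x0]` and nondecreasing on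
`[x0, ∞)`, or a single global maximum, i.e. nondecreasing then nonincreasing),
`Y = f(X)` almost surely, and the law of `Y` is atomless, then `λ(x, f(x)) = 1`
at every `x` with `0 < F1(x) < 1` and `0 < F2(f(x)) < 1`. -/
theorem relDist_eq_one_of_single_optimum
    {Ω : Type*} [MeasurableSpace Ω] (μ : Measure Ω) [IsProbabilityMeasure μ]
    (X Y : Ω → ℝ) (hX : Measurable X) (hY : Measurable Y)
    (f : ℝ → ℝ) (x0 : ℝ)
    (hf : (AntitoneOn f (Set.Iic x0) ∧ MonotoneOn f (Set.Ici x0)) ∨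
          (MonotoneOn f (Set.Iic x0) ∧ AntitoneOn f (Set.Ici x0)))
    (hXY : ∀ᵐ ω ∂μ, Y ω = f (X ω))
    (hatomless : ∀ c : ℝ, μ {ω | Y ω = c} = 0) :
    ∀ x : ℝ,
      0 < (μ {ω | X ω ≤ x}).toReal → (μ {ω | X ω ≤ x}).toReal < 1 →
      0 < (μ {ω | Y ω ≤ f x}).toReal → (μ {ω | Y ω ≤ f x}).toReal < 1 →
      relDist (μ {ω | X ω ≤ x ∧ Y ω ≤ f x}).toReal
        (μ {ω | X ω ≤ x}).toReal (μ {ω | Y ω ≤ f x}).toReal = 1 := by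
  intro x ha0 ha1 hb0 hb1
  have hAm : MeasurableSet {ω | X ω ≤ x} := measurableSet_le hX measurable_const
  have hBm : MeasurableSet {ω | Y ω ≤ f x} := measurableSet_le hY measurable_const
  set A : Set Ω := {ω | X ω ≤ x} with hAdef
  set B : Set Ω := {ω | Y ω ≤ f x} with hBdef
  have hABset : {ω | X ω ≤ x ∧ Y ω ≤ f x} = A ∩ B := rfl
  rw [hABset]
  have hne : μ {ω | ¬ Y ω = f (X ω)} = 0 := ae_iff.mp hXY
  have hatom : μ {ω | Y ω = f x} = 0 := hatomless (f x)
  have hfinA : μ A ≠ ⊤ := measure_ne_top μ A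
  have hfinB : μ B ≠ ⊤ := measure_ne_top μ B
  have hfinAB : μ (A ∩ B) ≠ ⊤ := measure_ne_top μ _
  set a := (μ A).toReal with hadef
  set b := (μ B).toReal with hbdef
  rcases hf with ⟨hdec, hinc⟩ | ⟨hinc, hdec⟩
  · rcases le_total x x0 with hx | hx
    · -- single minimum, x ≤ x0 : H = 0 and a + b ≤ 1
      have hnull : μ (A ∩ B) = 0 := by
        refine measure_mono_null ?_ (measure_union_null hne hatom)
        rintro ω ⟨hωA, hωB⟩
        by_cases h : Y ω = f (X ω)
        · right
          have h1 : f x ≤ f (X ω) := hdec (le_trans hωA hx) hx hωA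
          exact le_antisymm hωB (h ▸ h1)
        · left; exact h
      have hsum : a + b ≤ 1 := by
        have h1 : μ A + μ B ≤ 1 := by
          rw [← measure_union_add_inter A hBm, hnull, add_zero]
          exact prob_le_one
        have h2 := ENNReal.toReal_mono (by simp) h1
        rwa [ENNReal.toReal_add hfinA hfinB, ENNReal.toReal_one] at h2
      rw [hnull]
      rw [ENNReal.toReal_zero, relDist]
      rw [if_neg (not_le.mpr (mul_pos ha0 hb0)), max_eq_right (by linarith)]
      have hden : (0 : ℝ) - a * b < 0 := by nlinarith
      rw [div_self (ne_of_lt hden)]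
    · -- single minimum, x0 ≤ x : H = b and b ≤ a
      have hnull : μ (B \ A) = 0 := by
        refine measure_mono_null ?_ (measure_union_null hne hatom)
        rintro ω ⟨hωB, hωA⟩
        by_cases h : Y ω = f (X ω)
        · right
          have hXgt : x ≤ X ω := le_of_not_ge hωA
          have h1 : f x ≤ f (X ω) := hinc hx (le_trans hx hXgt) hXgt
          exact le_antisymm hωB (h ▸ h1)
        · left; exact h
      have hinter : μ (A ∩ B) = μ B := by
        have h := measure_inter_add_diff (μ := μ) B hAm
        rw [hnull, add_zero, Set.inter_comm] at h
        exact h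
      have hba : b ≤ a := by
        have : μ B ≤ μ A := hinter ▸ measure_mono Set.inter_subset_left
        exact ENNReal.toReal_mono hfinA this
      rw [hinter, ← hbdef, relDist, if_pos (by nlinarith), min_eq_right hba]
      have hden : (0 : ℝ) < b - a * b := by nlinarith
      rw [div_self (ne_of_gt hden)]
  · rcases le_total x x0 with hx | hx
    · -- single maximum, x ≤ x0 : H = a and a ≤ b
      have hnull : μ (A \ B) = 0 := by
        refine measure_mono_null ?_ hne
        rintro ω ⟨hωA, hωB⟩
        intro h
        exact hωB (show Y ω ≤ f x from h ▸ hinc (le_trans hωA hx) hx hωA)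
      have hinter : μ (A ∩ B) = μ A := by
        have h := measure_inter_add_diff (μ := μ) A hBm
        rw [hnull, add_zero] at h
        exact h
      have hab : a ≤ b := by
        have : μ A ≤ μ B := hinter ▸ measure_mono Set.inter_subset_right
        exact ENNReal.toReal_mono hfinB this
      rw [hinter, ← hadef, relDist, if_pos (by nlinarith), min_eq_left hab]
      have hden : (0 : ℝ) < a - a * b := by nlinarith
      rw [div_self (ne_of_gt hden)]
    · -- single maximum, x0 ≤ x : H = a + b - 1
      have hnull : μ ((A ∪ B)ᶜ) = 0 := by
        refine measure_mono_null ?_ hne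
        intro ω hω
        rw [Set.mem_compl_iff, Set.mem_union] at hω
        push_neg at hω
        obtain ⟨hωA, hωB⟩ := hω
        intro h
        have hXgt : x ≤ X ω := le_of_not_ge hωA
        exact hωB (show Y ω ≤ f x from h ▸ hdec hx (le_trans hx hXgt) hXgt)
      have hunion : μ (A ∪ B) = 1 := by
        have h := measure_add_measure_compl (μ := μ) (hAm.union hBm)
        rw [hnull, add_zero, measure_univ] at h
        exact h
      have hEq : (1 : ENNReal) + μ (A ∩ B) = μ A + μ B := by
        rw [← hunion]; exact measure_union_add_inter A hBm
      have h2 : 1 + (μ (A ∩ B)).toReal = a + b := by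
        have := congrArg ENNReal.toReal hEq
        rwa [ENNReal.toReal_add (by simp) hfinAB, ENNReal.toReal_add hfinA hfinB,
          ENNReal.toReal_one] at this
      have hH0 : 0 ≤ (μ (A ∩ B)).toReal := ENNReal.toReal_nonneg
      have hh : (μ (A ∩ B)).toReal = a + b - 1 := by linarith
      rw [hh, relDist, if_neg (by push_neg; nlinarith), max_eq_left (by linarith)]
      have hden : a + b - 1 - a * b < 0 := by nlinarith
      rw [div_self (ne_of_lt hden)]
end

section
/- Let X and Y be real-valued random variables on a probability space and let x, y be real numbers such that all four quadrant probabilities are positive: P(X ≤ x, Y ≤ y) > 0, P(X ≤ x, Y > y) > 0, P(X > x, Y ≤ y) > 0, and P(X > x, Y > y) > 0. Then max(F1(x) + F2(y) − 1, 0) < H(x,y) < min(F1(x), F2(y)); moreover 0 < F1(x) < 1, 0 < F2(y) < 1, and λ(x,y) < 1. -/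
open MeasureTheory

/-- The quadrant lemma underlying the paper's Theorem 5: if all four quadrant
probabilities at `(x,y)` are positive, then the joint CDF lies strictly between
the Fréchet–Hoeffding bounds at `(x,y)`, the marginal CDF values lie strictly
between `0` and `1`, and `λ(x,y) < 1`. -/
theorem relDist_lt_one_of_quadrants_pos
    {Ω : Type*} [MeasurableSpace Ω] (μ : Measure Ω) [IsProbabilityMeasure μ]
    (X Y : Ω → ℝ) (hX : Measurable X) (hY : Measurable Y) (x y : ℝ)
    (h1 : 0 < (μ {ω | X ω ≤ x ∧ Y ω ≤ y}).toReal)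
    (h2 : 0 < (μ {ω | X ω ≤ x ∧ y < Y ω}).toReal)
    (h3 : 0 < (μ {ω | x < X ω ∧ Y ω ≤ y}).toReal)
    (h4 : 0 < (μ {ω | x < X ω ∧ y < Y ω}).toReal) :
    max ((μ {ω | X ω ≤ x}).toReal + (μ {ω | Y ω ≤ y}).toReal - 1) 0
      < (μ {ω | X ω ≤ x ∧ Y ω ≤ y}).toReal ∧
    (μ {ω | X ω ≤ x ∧ Y ω ≤ y}).toReal
      < min (μ {ω | X ω ≤ x}).toReal (μ {ω | Y ω ≤ y}).toReal ∧
    0 < (μ {ω | X ω ≤ x}).toReal ∧ (μ {ω | X ω ≤ x}).toReal < 1 ∧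
    0 < (μ {ω | Y ω ≤ y}).toReal ∧ (μ {ω | Y ω ≤ y}).toReal < 1 ∧
    relDist (μ {ω | X ω ≤ x ∧ Y ω ≤ y}).toReal
      (μ {ω | X ω ≤ x}).toReal (μ {ω | Y ω ≤ y}).toReal < 1 := by
  have mX : MeasurableSet {ω | X ω ≤ x} := hX measurableSet_Iic
  have mY : MeasurableSet {ω | Y ω ≤ y} := hY measurableSet_Iic
  have mXc : MeasurableSet {ω | x < X ω} := hX measurableSet_Ioi
  have mYc : MeasurableSet {ω | y < Y ω} := hY measurableSet_Ioi
  have m11 : MeasurableSet {ω | X ω ≤ x ∧ Y ω ≤ y} := mX.inter mY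
  have m12 : MeasurableSet {ω | X ω ≤ x ∧ y < Y ω} := mX.inter mYc
  have m21 : MeasurableSet {ω | x < X ω ∧ Y ω ≤ y} := mXc.inter mY
  have m22 : MeasurableSet {ω | x < X ω ∧ y < Y ω} := mXc.inter mYc
  set a := (μ {ω | X ω ≤ x ∧ Y ω ≤ y}).toReal with ha
  set b := (μ {ω | X ω ≤ x ∧ y < Y ω}).toReal with hb
  set c := (μ {ω | x < X ω ∧ Y ω ≤ y}).toReal with hc
  set d := (μ {ω | x < X ω ∧ y < Y ω}).toReal with hd
  set F1 := (μ {ω | X ω ≤ x}).toReal with hF1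
  set F2 := (μ {ω | Y ω ≤ y}).toReal with hF2
  have hAeq : {ω | X ω ≤ x} = {ω | X ω ≤ x ∧ Y ω ≤ y} ∪ {ω | X ω ≤ x ∧ y < Y ω} := by
    ext ω; simp only [Set.mem_setOf_eq, Set.mem_union]
    rcases le_or_gt (Y ω) y with h | h <;> tauto
  have hBeq : {ω | Y ω ≤ y} = {ω | X ω ≤ x ∧ Y ω ≤ y} ∪ {ω | x < X ω ∧ Y ω ≤ y} := by
    ext ω; simp only [Set.mem_setOf_eq, Set.mem_union]
    rcases le_or_gt (X ω) x with h | h <;> tauto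
  have hUeq : (Set.univ : Set Ω) = ({ω | X ω ≤ x ∧ Y ω ≤ y} ∪ {ω | X ω ≤ x ∧ y < Y ω})
      ∪ ({ω | x < X ω ∧ Y ω ≤ y} ∪ {ω | x < X ω ∧ y < Y ω}) := by
    ext ω; simp only [Set.mem_setOf_eq, Set.mem_union, Set.mem_univ, true_iff]
    rcases le_or_gt (X ω) x with h | h <;> rcases le_or_gt (Y ω) y with h' | h' <;> tauto
  have d1 : Disjoint {ω | X ω ≤ x ∧ Y ω ≤ y} {ω | X ω ≤ x ∧ y < Y ω} := by
    rw [Set.disjoint_left]; rintro ω ⟨_, h⟩ ⟨_, h'⟩; exact absurd h' (not_lt.mpr h)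
  have d2 : Disjoint {ω | X ω ≤ x ∧ Y ω ≤ y} {ω | x < X ω ∧ Y ω ≤ y} := by
    rw [Set.disjoint_left]; rintro ω ⟨h, _⟩ ⟨h', _⟩; exact absurd h' (not_lt.mpr h)
  have d3 : Disjoint ({ω | X ω ≤ x ∧ Y ω ≤ y} ∪ {ω | X ω ≤ x ∧ y < Y ω})
      ({ω | x < X ω ∧ Y ω ≤ y} ∪ {ω | x < X ω ∧ y < Y ω}) := by
    rw [Set.disjoint_left]; rintro ω (⟨h, _⟩ | ⟨h, _⟩) (⟨h', _⟩ | ⟨h', _⟩) <;>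
      exact absurd h' (not_lt.mpr h)
  have d4 : Disjoint {ω | x < X ω ∧ Y ω ≤ y} {ω | x < X ω ∧ y < Y ω} := by
    rw [Set.disjoint_left]; rintro ω ⟨_, h⟩ ⟨_, h'⟩; exact absurd h' (not_lt.mpr h)
  have fin : ∀ s : Set Ω, μ s ≠ ⊤ := fun s => measure_ne_top μ s
  have eF1 : F1 = a + b := by
    rw [hF1, hAeq, measure_union d1 m12, ENNReal.toReal_add (fin _) (fin _)]
  have eF2 : F2 = a + c := by
    rw [hF2, hBeq, measure_union d2 m21, ENNReal.toReal_add (fin _) (fin _)]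
  have eU : a + b + c + d = 1 := by
    have h := measure_univ (μ := μ)
    rw [hUeq, measure_union d3 (m21.union m22), measure_union d1 m12,
      measure_union d4 m22] at h
    have := congrArg ENNReal.toReal h
    rw [ENNReal.toReal_add (by finiteness) (by finiteness),
      ENNReal.toReal_add (fin _) (fin _), ENNReal.toReal_add (fin _) (fin _)] at this
    rw [← ha, ← hb, ← hc, ← hd, ENNReal.toReal_one] at this
    linarith
  have hF1pos : 0 < F1 := by rw [eF1]; linarith
  have hF1lt : F1 < 1 := by rw [eF1]; linarith
  have hF2pos : 0 < F2 := by rw [eF2]; linarith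
  have hF2lt : F2 < 1 := by rw [eF2]; linarith
  have hmax : max (F1 + F2 - 1) 0 < a := by
    apply max_lt _ h1
    rw [eF1, eF2]; linarith
  have hmin : a < min F1 F2 := by
    apply lt_min <;> [rw [eF1]; rw [eF2]] <;> linarith
  refine ⟨hmax, hmin, hF1pos, hF1lt, hF2pos, hF2lt, ?_⟩
  have hPmin : F1 * F2 < min F1 F2 := by
    apply lt_min <;> nlinarith
  unfold relDist
  split_ifs with h
  · rw [div_lt_one (by linarith)]; linarith
  · push_neg at h
    rw [div_lt_one_of_neg (by linarith)]; linarith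
end

section
/- Let X be a real-valued random variable whose law μ satisfies μ([r,s]) = 1 and μ(I) > 0 for every nonempty open interval I ⊆ (r,s), where r < s. Let f : ℝ → ℝ be continuous, Y = f(X) almost surely, and let ymax be the maximum of f on [r,s]. Suppose there exist b, c ∈ (r,s) with b < c and f(b) = f(c) = ymax (two global maxima), and there exist p ∈ (r,b) and q ∈ (b,c) with f(p) < ymax and f(q) < ymax. Then there exists a point (x,y) such that max(F1(x) + F2(y) − 1, 0) < H(x,y) < min(F1(x), F2(y)); in particular λ(x,y) < 1 at this point. -/
open MeasureTheory

lemma relDist_lt_one {H F1 F2 : ℝ} (h0 : max (F1 + F2 - 1) 0 < H)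
    (h1 : H < min F1 F2) :
    relDist H F1 F2 < 1 := by
  have h0' : 0 < H := lt_of_le_of_lt (le_max_right _ _) h0
  have h2 : F1 + F2 - 1 < H := lt_of_le_of_lt (le_max_left _ _) h0
  have hF1 : H < F1 := lt_of_lt_of_le h1 (min_le_left _ _)
  have hF2 : H < F2 := lt_of_lt_of_le h1 (min_le_right _ _)
  have hF1' : F1 < 1 := by linarith
  have hF2' : F2 < 1 := by linarith
  have hprod : F1 * F2 ≥ max (F1 + F2 - 1) 0 := by
    rcases max_cases (F1 + F2 - 1) 0 with ⟨h, _⟩ | ⟨h, _⟩ <;> rw [h] <;> nlinarith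
  unfold relDist
  split_ifs with hif
  · have hd : 0 < min F1 F2 - F1 * F2 := by
      have : F1 * F2 < min F1 F2 := lt_of_le_of_lt hif h1
      linarith
    rw [div_lt_one hd]; linarith
  · push_neg at hif
    rcases lt_or_eq_of_le (le_of_lt (lt_of_lt_of_le h0' (le_of_lt hif)) : (0:ℝ) ≤ F1 * F2) with h | h
    · have hd : max (F1 + F2 - 1) 0 - F1 * F2 ≤ 0 := by linarith [hprod]
      rcases lt_or_eq_of_le hd with hd' | hd'
      · rw [div_lt_one_iff]
        right; right
        exact ⟨hd', by linarith⟩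
      · rw [hd', div_zero]; norm_num
    · exfalso; linarith

lemma exists_Ioo_subset (U : Set ℝ) (hU : IsOpen U) {t lo hi : ℝ}
    (ht : t ∈ U) (h1 : lo < t) (h2 : t < hi) :
    ∃ a b : ℝ, lo ≤ a ∧ a < b ∧ b ≤ hi ∧ Set.Ioo a b ⊆ U := by
  have hopen : IsOpen (U ∩ Set.Ioo lo hi) := hU.inter isOpen_Ioo
  have htm : t ∈ U ∩ Set.Ioo lo hi := ⟨ht, h1, h2⟩
  rcases Metric.isOpen_iff.1 hopen t htm with ⟨ε, hε, hball⟩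
  refine ⟨t - ε/2, t + ε/2, ?_, by linarith, ?_, ?_⟩
  · have : t - ε/2 ∈ U ∩ Set.Ioo lo hi := hball (by simp [Real.dist_eq, abs_of_pos hε]; linarith)
    linarith [this.2.1]
  · have : t + ε/2 ∈ U ∩ Set.Ioo lo hi := hball (by simp [Real.dist_eq, abs_of_pos hε]; linarith)
    linarith [this.2.2]
  · intro u hu
    have : u ∈ U ∩ Set.Ioo lo hi := hball (by
      simp [Real.dist_eq, abs_lt]
      constructor <;> [linarith [hu.1]; linarith [hu.2]])
    exact this.1

/-- Theorem 5 of the paper: let the law of `X` be carried by `[r,s]` and charge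
every nonempty open subinterval of `(r,s)`, let `f` be continuous with maximum
value `ymax` on `[r,s]`, attained at two interior points `b < c`, with
`f(p) < ymax` for some `p ∈ (r,b)` and `f(q) < ymax` for some `q ∈ (b,c)`, and
let `Y = f(X)` almost surely. Then there is a point `(x,y)` at which the joint
CDF lies strictly between the Fréchet–Hoeffding bounds; in particular
`λ(x,y) < 1` there. -/
theorem exists_relDist_lt_one_of_two_global_maxima
    {Ω : Type*} [MeasurableSpace Ω] (μ : Measure Ω) [IsProbabilityMeasure μ]
    (X Y : Ω → ℝ) (hX : Measurable X) (hY : Measurable Y)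
    (r s : ℝ) (hrs : r < s)
    (hsupp : μ (X ⁻¹' Set.Icc r s) = 1)
    (hcharge : ∀ a b : ℝ, r ≤ a → a < b → b ≤ s → 0 < μ (X ⁻¹' Set.Ioo a b))
    (f : ℝ → ℝ) (hfc : Continuous f)
    (hXY : ∀ᵐ ω ∂μ, Y ω = f (X ω))
    (ymax : ℝ) (hmax : ∀ t ∈ Set.Icc r s, f t ≤ ymax)
    (b c : ℝ) (hb : b ∈ Set.Ioo r s) (hc : c ∈ Set.Ioo r s) (hbc : b < c)
    (hfb : f b = ymax) (hfc' : f c = ymax)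
    (p : ℝ) (hp : p ∈ Set.Ioo r b) (hfp : f p < ymax)
    (q : ℝ) (hq : q ∈ Set.Ioo b c) (hfq : f q < ymax) :
    ∃ x y : ℝ,
      max ((μ {ω | X ω ≤ x}).toReal + (μ {ω | Y ω ≤ y}).toReal - 1) 0
        < (μ {ω | X ω ≤ x ∧ Y ω ≤ y}).toReal ∧
      (μ {ω | X ω ≤ x ∧ Y ω ≤ y}).toReal
        < min (μ {ω | X ω ≤ x}).toReal (μ {ω | Y ω ≤ y}).toReal ∧
      relDist (μ {ω | X ω ≤ x ∧ Y ω ≤ y}).toReal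
        (μ {ω | X ω ≤ x}).toReal (μ {ω | Y ω ≤ y}).toReal < 1 := by
  obtain ⟨hrb, hbs⟩ := hb
  obtain ⟨hrc, hcs⟩ := hc
  obtain ⟨hrp, hpb⟩ := hp
  obtain ⟨hbq, hqc⟩ := hq
  set x : ℝ := (b + q) / 2 with hxdef
  set y : ℝ := (max (f p) (f q) + ymax) / 2 with hydef
  have hM : max (f p) (f q) < ymax := max_lt hfp hfq
  have hyp : f p < y := lt_of_le_of_lt (le_max_left _ _) (by rw [hydef]; linarith)
  have hyq : f q < y := lt_of_le_of_lt (le_max_right _ _) (by rw [hydef]; linarith)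
  have hyymax : y < ymax := by rw [hydef]; linarith
  have hbx : b < x := by rw [hxdef]; linarith
  have hxq : x < q := by rw [hxdef]; linarith
  have hxs : x < s := by linarith
  -- the two open sets
  have hUlo : IsOpen (f ⁻¹' Set.Iio y) := (isOpen_Iio).preimage hfc
  have hUhi : IsOpen (f ⁻¹' Set.Ioi y) := (isOpen_Ioi).preimage hfc
  -- four intervals
  obtain ⟨a1, b1, ha1, hab1, hb1, hsub1⟩ :=
    exists_Ioo_subset _ hUlo (show p ∈ f ⁻¹' Set.Iio y from hyp) hrp (by linarith : p < x)
  obtain ⟨a2, b2, ha2, hab2, hb2, hsub2⟩ :=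
    exists_Ioo_subset _ hUhi (show b ∈ f ⁻¹' Set.Ioi y from by simp [hfb]; exact hyymax) hrb hbx
  obtain ⟨a3, b3, ha3, hab3, hb3, hsub3⟩ :=
    exists_Ioo_subset _ hUlo (show q ∈ f ⁻¹' Set.Iio y from hyq) hxq (by linarith : q < s)
  obtain ⟨a4, b4, ha4, hab4, hb4, hsub4⟩ :=
    exists_Ioo_subset _ hUhi (show c ∈ f ⁻¹' Set.Ioi y from by simp [hfc']; exact hyymax)
      (by linarith : x < c) hcs
  -- the null set
  set N : Set Ω := {ω | ¬ Y ω = f (X ω)} with hNdef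
  have hN : μ N = 0 := ae_iff.1 hXY
  -- the events
  set A : Set Ω := {ω | X ω ≤ x} with hAdef
  set B : Set Ω := {ω | Y ω ≤ y} with hBdef
  have mA : MeasurableSet A := hX measurableSet_Iic
  have mB : MeasurableSet B := hY measurableSet_Iic
  -- generic positivity principle
  have pos : ∀ (a' b' : ℝ) (S : Set Ω), r ≤ a' → a' < b' → b' ≤ s →
      (X ⁻¹' Set.Ioo a' b') \ N ⊆ S → 0 < μ S := by
    intro a' b' S h1 h2 h3 hsub
    calc 0 < μ (X ⁻¹' Set.Ioo a' b') := hcharge a' b' h1 h2 h3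
    _ = μ ((X ⁻¹' Set.Ioo a' b') \ N) := (measure_diff_null hN).symm
    _ ≤ μ S := measure_mono hsub
  have hAB : 0 < μ (A ∩ B) := by
    refine pos a1 b1 _ ha1 hab1 (by linarith) ?_
    rintro ω ⟨hω, hωN⟩
    have hYω : Y ω = f (X ω) := not_not.1 hωN
    have hflt : f (X ω) < y := hsub1 hω
    exact ⟨le_of_lt (lt_of_lt_of_le hω.2 hb1), show Y ω ≤ y by rw [hYω]; exact le_of_lt hflt⟩
  have hAdB : 0 < μ (A \ B) := by
    refine pos a2 b2 _ ha2 hab2 (by linarith) ?_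
    rintro ω ⟨hω, hωN⟩
    have hYω : Y ω = f (X ω) := not_not.1 hωN
    have hfgt : y < f (X ω) := hsub2 hω
    exact ⟨le_of_lt (lt_of_lt_of_le hω.2 hb2), show ¬ Y ω ≤ y by rw [hYω]; exact not_le.2 hfgt⟩
  have hBdA : 0 < μ (B \ A) := by
    refine pos a3 b3 _ (by linarith) hab3 hb3 ?_
    rintro ω ⟨hω, hωN⟩
    have hYω : Y ω = f (X ω) := not_not.1 hωN
    have hflt : f (X ω) < y := hsub3 hω
    refine ⟨show Y ω ≤ y by rw [hYω]; exact le_of_lt hflt, show ¬ X ω ≤ x from not_le.2 (lt_of_le_of_lt ha3 hω.1)⟩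
  have hC : 0 < μ ((A ∪ B)ᶜ) := by
    refine pos a4 b4 _ (by linarith) hab4 hb4 ?_
    rintro ω ⟨hω, hωN⟩
    have hYω : Y ω = f (X ω) := not_not.1 hωN
    have hfgt : y < f (X ω) := hsub4 hω
    simp only [Set.mem_compl_iff, Set.mem_union, hAdef, hBdef, Set.mem_setOf_eq, not_or, not_le]
    exact ⟨lt_of_le_of_lt ha4 hω.1, by rw [hYω]; exact hfgt⟩
  -- arithmetic
  have ne_top : ∀ S : Set Ω, μ S ≠ ⊤ := fun S => measure_ne_top μ S
  have key1 : (μ (A ∩ B)).toReal + (μ (A \ B)).toReal = (μ A).toReal := by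
    rw [← ENNReal.toReal_add (ne_top _) (ne_top _), measure_inter_add_diff A mB]
  have key2 : (μ (A ∩ B)).toReal + (μ (B \ A)).toReal = (μ B).toReal := by
    rw [Set.inter_comm, ← ENNReal.toReal_add (ne_top _) (ne_top _),
      measure_inter_add_diff B mA]
  have key3 : (μ (A ∪ B)).toReal + (μ (A ∩ B)).toReal = (μ A).toReal + (μ B).toReal := by
    rw [← ENNReal.toReal_add (ne_top _) (ne_top _), ← ENNReal.toReal_add (ne_top _) (ne_top _),
      measure_union_add_inter A mB]
  have key4 : (μ (A ∪ B)).toReal + (μ ((A ∪ B)ᶜ)).toReal = 1 := by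
    rw [← ENNReal.toReal_add (ne_top _) (ne_top _), measure_add_measure_compl (mA.union mB)]
    simp
  have rpos : ∀ S : Set Ω, 0 < μ S → 0 < (μ S).toReal := fun S h =>
    ENNReal.toReal_pos h.ne' (ne_top S)
  have h1 := rpos _ hAB
  have h2 := rpos _ hAdB
  have h3 := rpos _ hBdA
  have h4 := rpos _ hC
  refine ⟨x, y, ?_, ?_, ?_⟩
  · rw [show {ω | X ω ≤ x ∧ Y ω ≤ y} = A ∩ B from rfl,
      show {ω | X ω ≤ x} = A from rfl, show {ω | Y ω ≤ y} = B from rfl]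
    apply max_lt _ h1
    linarith
  · rw [show {ω | X ω ≤ x ∧ Y ω ≤ y} = A ∩ B from rfl,
      show {ω | X ω ≤ x} = A from rfl, show {ω | Y ω ≤ y} = B from rfl]
    apply lt_min <;> linarith
  · rw [show {ω | X ω ≤ x ∧ Y ω ≤ y} = A ∩ B from rfl,
      show {ω | X ω ≤ x} = A from rfl, show {ω | Y ω ≤ y} = B from rfl]
    apply relDist_lt_one
    · apply max_lt _ h1
      linarith
    · apply lt_min <;> linarith
end
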